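/- Let V be a K-vector space, λ ∈ K, and ρ : 𝕃_{n+1} → End_K(V) a Lie algebra homomorphism (End_K(V) carrying the commutator bracket) such that ρ(x_{n+1}) = λ·id_V. Then for every element σ of the Lie subalgebra of 𝔓_{n+1} generated by A_{1,n+1}, …, A_{n,n+1} and every l ∈ 𝕃_{n+1}, one has ρ(Θ(σ)(l)) = 0. -/

import Mathlib

/-! Drinfeld–Kohno Lie algebra and the infinitesimal braid action. -/

open FreeLieAlgebra

/-- The free Lie algebra `𝕃_n` on generators `x_1, …, x_n`. -/
abbrev FreeLie (K : Type*) [Field K] (n : ℕ) := FreeLieAlgebra K (Fin n)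

/-- Index type for the generators `A_{i,j}` (`i ≠ j`) of the Drinfeld–Kohno Lie algebra. -/
abbrev DKGenIdx (n : ℕ) := {p : Fin n × Fin n // p.1 ≠ p.2}

/-- The set of infinitesimal braid relations inside the free Lie algebra on the `A_{i,j}`. -/
def dkRels (K : Type*) [Field K] (n : ℕ) : Set (FreeLieAlgebra K (DKGenIdx n)) :=
  (⋃ (i : Fin n) (j : Fin n) (h : i ≠ j),
      {of K (⟨(i, j), h⟩ : DKGenIdx n) - of K (⟨(j, i), h.symm⟩ : DKGenIdx n)}) ∪
  (⋃ (i : Fin n) (j : Fin n) (k : Fin n) (hij : i ≠ j) (hjk : j ≠ k) (hik : i ≠ k),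
      {⁅of K (⟨(i, k), hik⟩ : DKGenIdx n),
        of K (⟨(i, j), hij⟩ : DKGenIdx n) + of K (⟨(j, k), hjk⟩ : DKGenIdx n)⁆}) ∪
  (⋃ (i : Fin n) (j : Fin n) (k : Fin n) (l : Fin n)
      (hij : i ≠ j) (hkl : k ≠ l) (_ : i ≠ k) (_ : i ≠ l) (_ : j ≠ k) (_ : j ≠ l),
      {⁅of K (⟨(i, j), hij⟩ : DKGenIdx n), of K (⟨(k, l), hkl⟩ : DKGenIdx n)⁆})

/-- The Lie ideal generated by the infinitesimal braid relations. -/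
noncomputable def dkIdeal (K : Type*) [Field K] (n : ℕ) : LieIdeal K (FreeLieAlgebra K (DKGenIdx n)) :=
  LieSubmodule.lieSpan K _ (dkRels K n)

/-- The Drinfeld–Kohno Lie algebra `𝔓_n`. -/
abbrev DK (K : Type*) [Field K] (n : ℕ) :=
  FreeLieAlgebra K (DKGenIdx n) ⧸ dkIdeal K n

/-- The generator `A_{i,j}` of the Drinfeld–Kohno Lie algebra `𝔓_n`. -/
noncomputable def dkGen (K : Type*) [Field K] {n : ℕ} {i j : Fin n} (h : i ≠ j) : DK K n :=
  LieSubmodule.Quotient.mk (N := dkIdeal K n) (of K (⟨(i, j), h⟩ : DKGenIdx n))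

attribute [local instance 100] LieRing.ofAssociativeRing


lemma freeLie_lieSpan_range_of (K : Type*) [Field K] (X : Type*) :
    LieSubalgebra.lieSpan K (FreeLieAlgebra K X) (Set.range (of K)) = ⊤ := by
  set S := LieSubalgebra.lieSpan K (FreeLieAlgebra K X) (Set.range (of K)) with hS
  let F : FreeLieAlgebra K X →ₗ⁅K⁆ S :=
    lift K (fun x => ⟨of K x, LieSubalgebra.subset_lieSpan ⟨x, rfl⟩⟩)
  have hF : S.incl.comp F = LieHom.id := by
    apply hom_ext
    intro x
    simp [F, lift_of_apply]
  rw [eq_top_iff]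
  intro l _
  have h2 : S.incl (F l) = l := by
    have := DFunLike.congr_fun hF l
    simpa using this
  rw [← h2]
  exact (F l).2

/-- Let `V` be a `K`-vector space, `λ ∈ K`, and
`ρ : 𝕃_{n+1} → End_K(V)` a Lie algebra homomorphism (with the commutator bracket on
`End_K(V)`) such that `ρ(x_{n+1}) = λ·id_V`.  Then for every element `σ` of the Lie
subalgebra of `𝔓_{n+1}` generated by `A_{1,n+1}, …, A_{n,n+1}`, and every
`l ∈ 𝕃_{n+1}`, one has `ρ(Θ(σ)(l)) = 0`. -/
theorem rho_comp_braid_action_eq_zero (K : Type*) [Field K] (n : ℕ) (hn : 1 ≤ n)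
    (Θ : DK K (n + 1) →ₗ⁅K⁆ LieDerivation K (FreeLie K (n + 1)) (FreeLie K (n + 1)))
    (hΘ : ∀ (i j : Fin (n + 1)) (h : i ≠ j) (k : Fin (n + 1)),
      Θ (dkGen K h) (of K k) =
        if k = i then ⁅of K i, of K j⁆
        else if k = j then ⁅of K j, of K i⁆
        else 0)
    (V : Type*) [AddCommGroup V] [Module K V] (lam : K)
    (ρ : FreeLie K (n + 1) →ₗ⁅K⁆ Module.End K V)
    (hρ : ρ (of K (Fin.last n)) = lam • (1 : Module.End K V)) :
    ∀ σ ∈ LieSubalgebra.lieSpan K (DK K (n + 1))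
        (Set.range fun i : Fin n => dkGen K (Fin.castSucc_lt_last i).ne),
      ∀ l : FreeLie K (n + 1), ρ (Θ σ l) = 0 := by
  intro σ hσ
  refine LieSubalgebra.lieSpan_induction (R := K)
      (p := fun σ _ => ∀ l : FreeLie K (n + 1), ρ (Θ σ l) = 0) ?_ ?_ ?_ ?_ ?_ hσ
  · intro x hx
    obtain ⟨i, rfl⟩ := hx
    have hgen : ∀ k : Fin (n + 1),
        ρ (Θ (dkGen K (Fin.castSucc_lt_last i).ne) (of K k)) = 0 := by
      intro k
      rw [hΘ]
      split_ifs with h1 h2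
      · subst h1
        rw [LieHom.map_lie, hρ]
        simp [Ring.lie_def]
      · subst h2
        rw [LieHom.map_lie, hρ]
        simp [Ring.lie_def]
      · simp
    intro l
    have hl : l ∈ LieSubalgebra.lieSpan K (FreeLie K (n + 1))
        (Set.range (of K)) := by
      rw [freeLie_lieSpan_range_of]; trivial
    refine LieSubalgebra.lieSpan_induction (R := K)
        (p := fun l _ => ρ (Θ (dkGen K (Fin.castSucc_lt_last i).ne) l) = 0) ?_ ?_ ?_ ?_ ?_ hl
    · rintro y ⟨k, rfl⟩; exact hgen k
    · simp
    · intro y z _ _ hy hz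
      rw [map_add, map_add, hy, hz, add_zero]
    · intro r y _ hy
      rw [map_smul, map_smul, hy, smul_zero]
    · intro y z _ _ hy hz
      rw [LieDerivation.apply_lie_eq_add, map_add, LieHom.map_lie, LieHom.map_lie,
        hy, hz, zero_lie, lie_zero, add_zero]
  · intro l; simp
  · intro x y _ _ hx hy l
    rw [map_add, LieDerivation.add_apply, map_add, hx, hy, add_zero]
  · intro r x _ hx l
    rw [map_smul, LieDerivation.smul_apply, map_smul, hx, smul_zero]
  · intro x y _ _ hx hy l
    rw [LieHom.map_lie, LieDerivation.commutator_apply, map_sub, hx, hy, sub_zero]
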